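/- arXiv:1609.09051 — 3 statements merged into one kernel-verified Lean document; each statement's English description precedes it below -/
import Mathlib

section
/- Let T1=(S ∪ U1, E1) and T2=(S ∪ U2, E2) be transmission trees with the same set of sampled cases S. If T1 and T2 are S-isomorphic, then v|_S(T1) = v|_S(T2). -/
/-- A directed path from `a` to `b` in the directed graph with edge relation `E`:
a nonempty list of vertices starting at `a`, ending at `b`, with consecutive
vertices joined by directed edges. -/
def IsDirPath {V : Type*} (E : V → V → Prop) (a b : V) (l : List V) : Prop :=
  l ≠ [] ∧ l.head? = some a ∧ l.getLast? = some b ∧ l.Chain' E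

/-- The transmission-tree axioms for a directed graph with edge relation `E`:
every node has at most one infector (incoming edge), there are no directed cycles,
and the underlying undirected graph is connected. -/
def IsTransTree {V : Type*} (E : V → V → Prop) : Prop :=
  (∀ a b c : V, E a c → E b c → a = b) ∧
  (∀ v : V, ¬ Relation.TransGen E v v) ∧
  (SimpleGraph.fromRel E).Connected

/-- The depth of node `n` (relative to the source `root`): the number of edges on
the directed path from `root` to `n`. -/
noncomputable def depth {V : Type*} (E : V → V → Prop) (root n : V) : ℕ :=
  sInf {k | ∃ l : List V, IsDirPath E root n l ∧ l.length = k + 1}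

/-- `OnPath E root i m` : the node `m` lies on the directed path `p_i` from `root` to `i`. -/
def OnPath {V : Type*} (E : V → V → Prop) (root i m : V) : Prop :=
  ∃ l : List V, IsDirPath E root i l ∧ m ∈ l

/-- `IsMRCI E root i j m` : `m` is the most recent common infector of `i` and `j`,
i.e. the node of greatest depth lying both on the path from `root` to `i` and on
the path from `root` to `j`. -/
def IsMRCI {V : Type*} (E : V → V → Prop) (root i j m : V) : Prop :=
  OnPath E root i m ∧ OnPath E root j m ∧
    ∀ m' : V, OnPath E root i m' → OnPath E root j m' →
      depth E root m' ≤ depth E root m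

/-- `vEntry E root i j` : the entry `v_{i,j}(T)` of the tree vector, namely the depth of
the most recent common infector of `i` and `j` (the greatest depth of a node lying on
both the path from the source to `i` and the path from the source to `j`). -/
noncomputable def vEntry {V : Type*} (E : V → V → Prop) (root i j : V) : ℕ :=
  sSup {k | ∃ m : V, OnPath E root i m ∧ OnPath E root j m ∧ depth E root m = k}

/-- The node set of the fully pruned tree `T*`: the nodes having at least one sampled
case among themselves-or-their-descendants, i.e. the nodes left after iteratively
removing unsampled nodes with no infectees. -/
def PrunedSet {V : Type*} (E : V → V → Prop) (Samp : Set V) : Set V :=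
  {n : V | ∃ s ∈ Samp, Relation.ReflTransGen E n s}

/-- `S`-isomorphism of two transmission trees with node sets `S ⊕ U1` and `S ⊕ U2`
(sampled cases `S`, unsampled cases `U1`, `U2`): after pruning unsampled nodes
without sampled descendants, there is a bijection between the pruned node sets which
is the identity on the sampled cases and maps edges to edges in both directions. -/
def SIso {S U1 U2 : Type*} (E1 : S ⊕ U1 → S ⊕ U1 → Prop)
    (E2 : S ⊕ U2 → S ⊕ U2 → Prop) : Prop :=
  ∃ φ : (PrunedSet E1 (Set.range Sum.inl)) ≃ (PrunedSet E2 (Set.range Sum.inl)),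
    (∀ (s : S) (hs : (Sum.inl s : S ⊕ U1) ∈ PrunedSet E1 (Set.range Sum.inl)),
        (φ ⟨Sum.inl s, hs⟩ : S ⊕ U2) = Sum.inl s) ∧
    (∀ a b : (PrunedSet E1 (Set.range Sum.inl)),
        E1 a.1 b.1 ↔ E2 (φ a).1 (φ b).1)

section Paths
variable {V : Type*} {E : V → V → Prop}

open Relation List

lemma dirPath_rtg : ∀ (l : List V) {a b : V}, IsDirPath E a b l → ReflTransGen E a b
  | [], a, b, h => absurd rfl h.1
  | [x], a, b, h => by
      obtain ⟨-, h2, h3, -⟩ := h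
      simp only [head?_cons, Option.some.injEq] at h2
      simp only [getLast?_singleton, Option.some.injEq] at h3
      subst h2; subst h3; exact .refl
  | x :: y :: t, a, b, h => by
      obtain ⟨-, h2, h3, h4⟩ := h
      simp only [head?_cons, Option.some.injEq] at h2
      subst h2
      simp only [Chain', isChain_cons_cons] at h4
      exact .head h4.1 (dirPath_rtg (y :: t) ⟨by simp, rfl, h3, h4.2⟩)

lemma dirPath_transGen {l : List V} {a b : V} (h : IsDirPath E a b l)
    (hlen : 2 ≤ l.length) : TransGen E a b := by
  match l, h with
  | x :: y :: t, ⟨_, h2, h3, h4⟩ =>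
    simp only [head?_cons, Option.some.injEq] at h2
    subst h2
    simp only [Chain', isChain_cons_cons] at h4
    exact Relation.TransGen.head' h4.1 (dirPath_rtg (y :: t) ⟨by simp, rfl, h3, h4.2⟩)

lemma rtg_dirPath {a b : V} (h : ReflTransGen E a b) : ∃ l, IsDirPath E a b l := by
  induction h with
  | refl => exact ⟨[a], by simp [IsDirPath, Chain', isChain_singleton]⟩
  | @tail b c hac hcb ih =>
    obtain ⟨l, h1, h2, h3, h4⟩ := ih
    refine ⟨l ++ [c], by simp, ?_, by simp, ?_⟩
    · cases l with
      | nil => exact absurd rfl h1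
      | cons x t => simpa using h2
    · simp only [Chain', isChain_append]
      refine ⟨h4, isChain_singleton _, ?_⟩
      intro x hx y hy
      rw [h3] at hx
      simp only [head?_cons, Option.mem_def, Option.some.injEq] at hx hy
      subst hx; subst hy; exact hcb

lemma dirPath_loop (hacyc : ∀ v : V, ¬ Relation.TransGen E v v) {a : V} {l : List V}
    (h : IsDirPath E a a l) : l = [a] := by
  match l, h with
  | [], h => exact absurd rfl h.1
  | [x], h => obtain ⟨-, h2, -, -⟩ := h
              simp only [head?_cons, Option.some.injEq] at h2; rw [h2]
  | x :: y :: t, h =>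
    exact absurd (dirPath_transGen h (by simp)) (hacyc a)

lemma dirPath_decomp {root b : V} {l : List V} (h : IsDirPath E root b l)
    (hne : b ≠ root) :
    ∃ (l' : List V) (p : V), l = l' ++ [b] ∧ IsDirPath E root p l' ∧ E p b := by
  obtain ⟨h1, h2, h3, h4⟩ := h
  have hgl : l.getLast h1 = b := by
    rw [List.getLast?_eq_getLast h1] at h3; exact Option.some.inj h3
  have hdec : l.dropLast ++ [b] = l := by rw [← hgl]; exact List.dropLast_append_getLast h1
  have hdne : l.dropLast ≠ [] := by
    intro hd
    rw [← hdec, hd, List.nil_append] at h2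
    simp only [List.head?_cons, Option.some.injEq] at h2
    exact hne h2
  have hch : List.Chain' E l.dropLast ∧ ∀ x ∈ l.dropLast.getLast?, ∀ y ∈ ([b] : List V).head?, E x y := by
    rw [← hdec] at h4
    have := List.isChain_append.1 h4
    exact ⟨this.1, this.2.2⟩
  set p := l.dropLast.getLast hdne with hp
  refine ⟨l.dropLast, p, hdec.symm, ⟨hdne, ?_, List.getLast?_eq_getLast hdne, hch.1⟩, ?_⟩
  · rw [← hdec] at h2
    cases hd : l.dropLast with
    | nil => exact absurd hd hdne
    | cons x xs => rw [hd] at h2; simpa using h2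
  · exact hch.2 p (by rw [List.getLast?_eq_getLast hdne]; rfl) b rfl

lemma dirPath_unique (hpar : ∀ a b c : V, E a c → E b c → a = b)
    (hacyc : ∀ v : V, ¬ Relation.TransGen E v v) {root : V} :
    ∀ (n : ℕ) (l1 : List V) {b : V} (l2 : List V), l1.length ≤ n →
      IsDirPath E root b l1 → IsDirPath E root b l2 → l1 = l2 := by
  intro n
  induction n with
  | zero =>
    intro l1 b l2 hlen h1 _
    rw [List.length_eq_zero_iff.mp (Nat.le_zero.mp hlen)] at h1
    exact absurd rfl h1.1
  | succ n ih =>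
    intro l1 b l2 hlen h1 h2
    by_cases hb : b = root
    · subst hb; rw [dirPath_loop hacyc h1, dirPath_loop hacyc h2]
    · obtain ⟨l1', p1, e1, hd1, he1⟩ := dirPath_decomp h1 hb
      obtain ⟨l2', p2, e2, hd2, he2⟩ := dirPath_decomp h2 hb
      have hpp : p1 = p2 := hpar _ _ _ he1 he2
      subst hpp
      have hlen' : l1'.length ≤ n := by
        have := congrArg List.length e1; simp at this; omega
      rw [e1, e2, ih l1' l2' hlen' hd1 hd2]

lemma depth_eq (hpar : ∀ a b c : V, E a c → E b c → a = b)
    (hacyc : ∀ v : V, ¬ Relation.TransGen E v v) {root b : V} {l : List V}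
    (h : IsDirPath E root b l) : depth E root b = l.length - 1 := by
  have hset : {k | ∃ l' : List V, IsDirPath E root b l' ∧ l'.length = k + 1}
      = {l.length - 1} := by
    ext k
    simp only [Set.mem_setOf_eq, Set.mem_singleton_iff]
    constructor
    · rintro ⟨l', hl', hlen⟩
      rw [dirPath_unique hpar hacyc l'.length l' l le_rfl hl' h] at hlen
      omega
    · rintro rfl
      have : 0 < l.length := List.length_pos_iff.2 h.1
      exact ⟨l, h, by omega⟩
  rw [depth, hset, csInf_singleton]

lemma mem_path_split {root b m : V} {l : List V} (h : IsDirPath E root b l)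
    (hm : m ∈ l) :
    ∃ l₁ l₂, l = l₁ ++ m :: l₂ ∧ IsDirPath E root m (l₁ ++ [m]) ∧
      IsDirPath E m b (m :: l₂) := by
  obtain ⟨l₁, l₂, rfl⟩ := List.append_of_mem hm
  obtain ⟨h1, h2, h3, h4⟩ := h
  simp only [List.Chain', List.isChain_append] at h4
  obtain ⟨hc1, hc2, hlink⟩ := h4
  refine ⟨l₁, l₂, rfl, ⟨by simp, ?_, List.getLast?_concat, ?_⟩, ⟨by simp, rfl, ?_, hc2⟩⟩
  · cases l₁ with
    | nil => simpa using h2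
    | cons x xs => simpa using h2
  · simp only [List.Chain', List.isChain_append]
    exact ⟨hc1, List.isChain_singleton _, fun x hx y hy => by
      simp only [List.head?_cons, Option.mem_def, Option.some.injEq] at hy
      subst hy; exact hlink x hx m rfl⟩
  · rwa [List.getLast?_append_cons] at h3

lemma mem_path_rtg {root b m : V} {l : List V} (h : IsDirPath E root b l)
    (hm : m ∈ l) : Relation.ReflTransGen E m b := by
  obtain ⟨l₁, l₂, -, -, h2⟩ := mem_path_split h hm
  exact dirPath_rtg _ h2

lemma reach_all (hpar : ∀ a b c : V, E a c → E b c → a = b)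
    (hconn : (SimpleGraph.fromRel E).Connected) {root : V}
    (hroot : ∀ b, ¬ E b root) (n : V) : Relation.ReflTransGen E root n := by
  have key : ∀ a b : V, (SimpleGraph.fromRel E).Walk a b →
      Relation.ReflTransGen E root a → Relation.ReflTransGen E root b := by
    intro a b w
    induction w with
    | nil => exact id
    | cons hadj _ ih =>
      intro ha
      apply ih
      rw [SimpleGraph.fromRel_adj] at hadj
      obtain ⟨-, hE | hE⟩ := hadj
      · exact ha.tail hE
      · rcases ha.cases_tail with rfl | ⟨d, hd, hda⟩
        · exact absurd hE (hroot _)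
        · rwa [hpar _ _ _ hE hda]
  obtain ⟨w⟩ := hconn.preconnected root n
  exact key root n w .refl

lemma root_unique {root x : V} (hroot : ∀ b, ¬ E b x)
    (h : Relation.ReflTransGen E root x) : x = root := by
  rcases h.cases_tail with h | ⟨c, -, hc⟩
  · exact h
  · exact absurd hc (hroot c)

section Pmap
variable {W : Type*} {E' : W → W → Prop} {P : V → Prop} {f : ∀ x, P x → W}

lemma chain'_pmap (hf : ∀ a b ha hb, E a b → E' (f a ha) (f b hb)) :
    ∀ (l : List V) (H : ∀ x ∈ l, P x), l.Chain' E → (l.pmap f H).Chain' E'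
  | [], _, _ => by simp [List.Chain', List.isChain_nil]
  | [x], _, _ => by simp [List.Chain', List.isChain_singleton]
  | x :: y :: t, H, hch => by
    simp only [List.Chain', List.isChain_cons_cons] at hch
    rw [List.pmap, List.pmap]; simp only [List.Chain', List.isChain_cons_cons]
    have := chain'_pmap hf (y :: t) (fun a ha => H a (List.mem_cons_of_mem _ ha)) hch.2
    rw [List.pmap] at this
    exact ⟨hf _ _ _ _ hch.1, this⟩

lemma head?_pmap {a : V} : ∀ (l : List V) (H : ∀ x ∈ l, P x), l.head? = some a →
    ∃ hp : P a, (l.pmap f H).head? = some (f a hp)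
  | [], _, h => by simp at h
  | x :: t, H, h => by
    simp only [List.head?_cons, Option.some.injEq] at h
    subst h
    exact ⟨H x (List.mem_cons_self), rfl⟩

lemma getLast?_pmap {b : V} : ∀ (l : List V) (H : ∀ x ∈ l, P x), l.getLast? = some b →
    ∃ hp : P b, (l.pmap f H).getLast? = some (f b hp)
  | [], _, h => by simp at h
  | [x], H, h => by
    simp only [List.getLast?_singleton, Option.some.injEq] at h
    subst h
    exact ⟨H x (List.mem_singleton_self _), rfl⟩
  | x :: y :: t, H, h => by
    rw [List.getLast?_cons_cons] at h
    obtain ⟨hp, hlast⟩ := getLast?_pmap (y :: t)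
      (fun a ha => H a (List.mem_cons_of_mem _ ha)) h
    refine ⟨hp, ?_⟩
    rw [List.pmap, List.pmap, List.getLast?_cons_cons, ← List.pmap]
    exact hlast

lemma dirPath_pmap (hf : ∀ a b ha hb, E a b → E' (f a ha) (f b hb))
    {a b : V} {l : List V} (H : ∀ x ∈ l, P x)
    (h : IsDirPath E a b l) :
    ∃ (ha : P a) (hb : P b), IsDirPath E' (f a ha) (f b hb) (l.pmap f H) := by
  obtain ⟨h1, h2, h3, h4⟩ := h
  obtain ⟨ha, hh⟩ := head?_pmap (f := f) l H h2
  obtain ⟨hb, hl⟩ := getLast?_pmap (f := f) l H h3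
  exact ⟨ha, hb, by simpa using h1, hh, hl, chain'_pmap hf l H h4⟩

end Pmap
end Paths

lemma key_subset {S U1 U2 : Type*}
    (E1 : S ⊕ U1 → S ⊕ U1 → Prop) (E2 : S ⊕ U2 → S ⊕ U2 → Prop)
    (h1 : IsTransTree E1) (h2 : IsTransTree E2)
    (root1 : S ⊕ U1) (hroot1 : ∀ b, ¬ E1 b root1)
    (root2 : S ⊕ U2) (hroot2 : ∀ b, ¬ E2 b root2)
    (φ : (PrunedSet E1 (Set.range Sum.inl)) ≃ (PrunedSet E2 (Set.range Sum.inl)))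
    (hS : ∀ (s : S) (hs : (Sum.inl s : S ⊕ U1) ∈ PrunedSet E1 (Set.range Sum.inl)),
        (φ ⟨Sum.inl s, hs⟩ : S ⊕ U2) = Sum.inl s)
    (hE : ∀ a b : (PrunedSet E1 (Set.range Sum.inl)),
        E1 a.1 b.1 ↔ E2 (φ a).1 (φ b).1)
    (s t : S) (k : ℕ)
    (hk : ∃ m, OnPath E1 root1 (Sum.inl s) m ∧ OnPath E1 root1 (Sum.inl t) m ∧
        depth E1 root1 m = k) :
    ∃ m, OnPath E2 root2 (Sum.inl s) m ∧ OnPath E2 root2 (Sum.inl t) m ∧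
        depth E2 root2 m = k := by
  obtain ⟨hpar1, hacyc1, hconn1⟩ := h1
  obtain ⟨hpar2, hacyc2, hconn2⟩ := h2
  obtain ⟨m, hms, hmt, hdep⟩ := hk
  set f : ∀ x : S ⊕ U1, x ∈ PrunedSet E1 (Set.range Sum.inl) → S ⊕ U2 := fun x h => (φ ⟨x, h⟩).1 with hfdef
  have hf : ∀ (a b : S ⊕ U1) ha hb, E1 a b → E2 (f a ha) (f b hb) :=
    fun a b ha hb h => (hE ⟨a, ha⟩ ⟨b, hb⟩).1 h
  -- f maps root1 to root2
  have froot : ∀ h, f root1 h = root2 := by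
    intro h
    have hxP : f root1 h ∈ PrunedSet E2 (Set.range Sum.inl) := (φ ⟨root1, h⟩).2
    have hnop : ∀ p, ¬ E2 p (f root1 h) := by
      intro p hp
      obtain ⟨s', hs', hrtg⟩ := hxP
      have hpP : p ∈ PrunedSet E2 (Set.range Sum.inl) := ⟨s', hs', hrtg.head hp⟩
      have := (hE (φ.symm ⟨p, hpP⟩) ⟨root1, h⟩).2
      rw [Equiv.apply_symm_apply] at this
      exact hroot1 _ (this hp)
    exact root_unique hnop (reach_all hpar2 hconn2 hroot2 _)
  have fs : ∀ (u : S) (h), f (Sum.inl u) h = Sum.inl u := fun u h => hS u h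
  -- transfer an OnPath statement
  have transfer : ∀ (u : S) (hmu : OnPath E1 root1 (Sum.inl u) m),
      ∀ (hmP : m ∈ PrunedSet E1 (Set.range Sum.inl)), OnPath E2 root2 (Sum.inl u) (f m hmP) := by
    intro u hmu hmP
    obtain ⟨l, hl, hml⟩ := hmu
    have H : ∀ x ∈ l, x ∈ PrunedSet E1 (Set.range Sum.inl) := fun x hx =>
      ⟨Sum.inl u, ⟨u, rfl⟩, mem_path_rtg hl hx⟩
    obtain ⟨ha, hb, hd2⟩ := dirPath_pmap hf H hl
    rw [froot ha, fs u hb] at hd2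
    exact ⟨l.pmap f H, hd2, List.mem_pmap.2 ⟨m, hml, rfl⟩⟩
  -- m is pruned
  have hmP : m ∈ PrunedSet E1 (Set.range Sum.inl) := by
    obtain ⟨l, hl, hml⟩ := hms
    exact ⟨Sum.inl s, ⟨s, rfl⟩, mem_path_rtg hl hml⟩
  refine ⟨f m hmP, transfer s hms hmP, transfer t hmt hmP, ?_⟩
  -- depth preservation
  obtain ⟨l, hl, hml⟩ := hms
  obtain ⟨l₁, l₂, hsplit, hdm, hmb⟩ := mem_path_split hl hml
  have hrtgms : Relation.ReflTransGen E1 m (Sum.inl s) := dirPath_rtg _ hmb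
  have H' : ∀ x ∈ l₁ ++ [m], x ∈ PrunedSet E1 (Set.range Sum.inl) := fun x hx =>
    ⟨Sum.inl s, ⟨s, rfl⟩, (mem_path_rtg hdm hx).trans hrtgms⟩
  obtain ⟨ha, hb, hd2⟩ := dirPath_pmap hf H' hdm
  rw [froot ha] at hd2
  have hfm : f m hb = f m hmP := rfl
  rw [hfm] at hd2
  have d2 := depth_eq hpar2 hacyc2 hd2
  have d1 := depth_eq hpar1 hacyc1 hdm
  rw [List.length_pmap] at d2
  rw [d2, ← d1, hdep]


/-- If two transmission trees `T1 = (S ⊕ U1, E1)` and `T2 = (S ⊕ U2, E2)`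
with the same set of sampled cases `S` are `S`-isomorphic, then `v|_S(T1) = v|_S(T2)`. -/
theorem stmt8 {S U1 U2 : Type*} [Fintype S] [Fintype U1] [Fintype U2]
    (E1 : S ⊕ U1 → S ⊕ U1 → Prop) (E2 : S ⊕ U2 → S ⊕ U2 → Prop)
    (h1 : IsTransTree E1) (h2 : IsTransTree E2)
    (root1 : S ⊕ U1) (hroot1 : ∀ b, ¬ E1 b root1)
    (root2 : S ⊕ U2) (hroot2 : ∀ b, ¬ E2 b root2)
    (hiso : SIso E1 E2) :
    ∀ s t : S, vEntry E1 root1 (Sum.inl s) (Sum.inl t)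
      = vEntry E2 root2 (Sum.inl s) (Sum.inl t) := by
  intro s t
  obtain ⟨φ, hS, hE⟩ := hiso
  have hS' : ∀ (u : S) (hs : (Sum.inl u : S ⊕ U2) ∈ PrunedSet E2 (Set.range Sum.inl)),
      (φ.symm ⟨Sum.inl u, hs⟩ : S ⊕ U1) = Sum.inl u := by
    intro u hs
    have hu1 : (Sum.inl u : S ⊕ U1) ∈ PrunedSet E1 (Set.range Sum.inl) :=
      ⟨Sum.inl u, ⟨u, rfl⟩, Relation.ReflTransGen.refl⟩
    have h := hS u hu1
    have : φ ⟨Sum.inl u, hu1⟩ = ⟨Sum.inl u, hs⟩ := Subtype.ext h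
    rw [← this, Equiv.symm_apply_apply]
  have hE' : ∀ a b : (PrunedSet E2 (Set.range Sum.inl)),
      E2 a.1 b.1 ↔ E1 (φ.symm a).1 (φ.symm b).1 := by
    intro a b
    have := hE (φ.symm a) (φ.symm b)
    rw [Equiv.apply_symm_apply, Equiv.apply_symm_apply] at this
    exact this.symm
  unfold vEntry
  congr 1
  apply Set.Subset.antisymm
  · intro k hk
    exact key_subset E1 E2 h1 h2 root1 hroot1 root2 hroot2 φ hS hE s t k hk
  · intro k hk
    exact key_subset E2 E1 h2 h1 root2 hroot2 root1 hroot1 φ.symm hS' hE' s t k hk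
end

section
/- Let T1=(N1,E1) and T2=(N2,E2) be transmission trees on the same node set N1 = N2 = S with all cases sampled (no unsampled cases). If v(T1) = v(T2), i.e. for all i,j in S the depth of the most recent common infector of i and j is the same in T1 as in T2, then E1 = E2, i.e. T1 and T2 are the same tree. -/
section TreeAux

variable {S : Type*} {E : S → S → Prop} {root : S}

lemma mem_of_getLast?' {l : List S} {a : S} (h : l.getLast? = some a) : a ∈ l := by
  have ha : a ∈ l.getLast? := by rw [Option.mem_def, h]
  obtain ⟨hne, rfl⟩ := List.mem_getLast?_eq_getLast ha
  exact List.getLast_mem hne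

lemma mem_of_head?' {l : List S} {a : S} (h : l.head? = some a) : a ∈ l :=
  List.mem_of_mem_head? (by rw [Option.mem_def, h])

lemma dirPath_snoc {u v : S} {l : List S} (h : IsDirPath E root u l) (he : E u v) :
    IsDirPath E root v (l ++ [v]) := by
  obtain ⟨hne, hh, hl, hc⟩ := h
  refine ⟨by simp, ?_, List.getLast?_concat, ?_⟩
  · cases l with
    | nil => exact absurd rfl hne
    | cons a t => simpa using hh
  · refine List.isChain_append.2 ⟨hc, List.isChain_singleton v, ?_⟩
    intro x hx y hy
    simp only [List.head?_cons, Option.mem_def, Option.some.injEq] at hy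
    rw [Option.mem_def, hl] at hx
    cases hx; cases hy
    exact he

lemma reach_back (huniq : ∀ a b c : S, E a c → E b c → a = b)
    (hroot : ∀ b, ¬ E b root) {u v : S}
    (h : Relation.ReflTransGen E root u) (he : E v u) :
    Relation.ReflTransGen E root v := by
  rcases h.cases_tail with rfl | ⟨w, hw, hwu⟩
  · exact absurd he (hroot v)
  · rwa [huniq v w u he hwu]

lemma reachAll (huniq : ∀ a b c : S, E a c → E b c → a = b)
    (hroot : ∀ b, ¬ E b root)
    (hconn : (SimpleGraph.fromRel E).Connected) (v : S) :
    Relation.ReflTransGen E root v := by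
  have key : ∀ u w : S, (SimpleGraph.fromRel E).Walk u w →
      Relation.ReflTransGen E root u → Relation.ReflTransGen E root w := by
    intro u w p
    induction p with
    | nil => exact id
    | cons hadj _ ih =>
      intro hu
      apply ih
      rcases (SimpleGraph.fromRel_adj E _ _).1 hadj with ⟨_, hE | hE⟩
      · exact hu.tail hE
      · exact reach_back huniq hroot hu hE
  obtain ⟨w⟩ := hconn.preconnected root v
  exact key root v w Relation.ReflTransGen.refl

lemma dirPath_exists (huniq : ∀ a b c : S, E a c → E b c → a = b)
    (hroot : ∀ b, ¬ E b root)
    (hconn : (SimpleGraph.fromRel E).Connected) (v : S) :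
    ∃ l, IsDirPath E root v l := by
  induction reachAll huniq hroot hconn v with
  | refl => exact ⟨[root], by simp [IsDirPath, List.Chain']⟩
  | tail _ he ih =>
    obtain ⟨l, hl⟩ := ih
    exact ⟨l ++ [_], dirPath_snoc hl he⟩

lemma dirPath_cases {v : S} {l : List S} (h : IsDirPath E root v l) :
    (v = root ∧ l = [root]) ∨
    ∃ p l₀, IsDirPath E root p l₀ ∧ E p v ∧ l = l₀ ++ [v] := by
  obtain ⟨hne, hh, hl, hc⟩ := h
  rcases l.eq_nil_or_concat with rfl | ⟨l₀, b, rfl⟩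
  · exact absurd rfl hne
  · rw [List.concat_eq_append] at hh hl hc ⊢
    rw [List.getLast?_concat] at hl
    injection hl with hl; subst hl
    cases l₀ with
    | nil =>
      simp only [List.nil_append, List.head?_cons, Option.some.injEq] at hh
      exact Or.inl ⟨hh, by simp [hh]⟩
    | cons a t =>
      right
      have hc' := List.isChain_append.1 hc
      have hlast : ((a :: t).getLast (by simp)) ∈ (a :: t).getLast? := by
        rw [List.getLast?_eq_getLast_of_ne_nil (by simp)]; rfl
      refine ⟨(a :: t).getLast (by simp), a :: t,
        ⟨by simp, by simpa using hh, List.getLast?_eq_getLast_of_ne_nil (by simp), hc'.1⟩, ?_, rfl⟩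
      exact hc'.2.2 _ hlast _ rfl

lemma dirPath_unique_s9 (huniq : ∀ a b c : S, E a c → E b c → a = b)
    (hroot : ∀ b, ¬ E b root) :
    ∀ (n : ℕ) (v : S) (l l' : List S), l.length ≤ n →
      IsDirPath E root v l → IsDirPath E root v l' → l = l' := by
  intro n
  induction n with
  | zero =>
    intro v l l' hlen hl _
    have := hl.1
    interval_cases h : l.length
    · simp [List.length_eq_zero_iff] at h; exact absurd h this
  | succ n ih =>
    intro v l l' hlen hl hl'
    rcases dirPath_cases hl with ⟨rfl, rfl⟩ | ⟨p, l₀, h₀, hp, rfl⟩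
    · rcases dirPath_cases hl' with ⟨_, rfl⟩ | ⟨p, l₀, h₀, hp, rfl⟩
      · rfl
      · exact absurd hp (hroot p)
    · rcases dirPath_cases hl' with ⟨rfl, rfl⟩ | ⟨p', l₀', h₀', hp', rfl⟩
      · exact absurd hp (hroot p)
      · obtain rfl : p = p' := huniq _ _ _ hp hp'
        have hlen' : l₀.length ≤ n := by simp at hlen; omega
        rw [ih p l₀ l₀' hlen' h₀ h₀']

lemma depth_succ_eq (huniq : ∀ a b c : S, E a c → E b c → a = b)
    (hroot : ∀ b, ¬ E b root) {v : S} {l : List S} (h : IsDirPath E root v l) :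
    depth E root v + 1 = l.length := by
  have hpos : 1 ≤ l.length := List.length_pos_iff.2 h.1
  have hset : {k | ∃ l' : List S, IsDirPath E root v l' ∧ l'.length = k + 1} = {l.length - 1} := by
    ext k
    simp only [Set.mem_setOf_eq, Set.mem_singleton_iff]
    constructor
    · rintro ⟨l', hl', hlen⟩
      have := dirPath_unique_s9 huniq hroot l'.length v l' l le_rfl hl' h
      subst this; omega
    · rintro rfl
      exact ⟨l, h, by omega⟩
  rw [depth, hset, csInf_singleton]
  omega

lemma onPath_prefix {v m : S} {l : List S} (h : IsDirPath E root v l) (hm : m ∈ l) :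
    ∃ l', IsDirPath E root m l' ∧ l' <+: l := by
  obtain ⟨s, t, rfl⟩ := List.append_of_mem hm
  have hpre : (s ++ [m]) <+: (s ++ m :: t) := ⟨t, by simp⟩
  refine ⟨s ++ [m], ⟨by simp, ?_, List.getLast?_concat, h.2.2.2.prefix hpre⟩, hpre⟩
  cases s with
  | nil => simpa using h.2.1
  | cons a s' => simpa using h.2.1

lemma depth_le_of_mem (huniq : ∀ a b c : S, E a c → E b c → a = b)
    (hroot : ∀ b, ¬ E b root) {v m : S} {l : List S}
    (h : IsDirPath E root v l) (hm : m ∈ l) :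
    depth E root m ≤ depth E root v := by
  obtain ⟨l', hl', hpre⟩ := onPath_prefix h hm
  have h1 := depth_succ_eq huniq hroot hl'
  have h2 := depth_succ_eq huniq hroot h
  have := hpre.length_le
  omega

lemma eq_of_mem_depth_eq (huniq : ∀ a b c : S, E a c → E b c → a = b)
    (hroot : ∀ b, ¬ E b root) {v m : S} {l : List S}
    (h : IsDirPath E root v l) (hm : m ∈ l)
    (hd : depth E root m = depth E root v) : m = v := by
  obtain ⟨l', hl', hpre⟩ := onPath_prefix h hm
  have h1 := depth_succ_eq huniq hroot hl'
  have h2 := depth_succ_eq huniq hroot h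
  have hll : l' = l := hpre.eq_of_length (by omega)
  subst hll
  have := hl'.2.2.1
  rw [h.2.2.1] at this
  injection this with h3
  exact h3.symm

lemma depth_root (huniq : ∀ a b c : S, E a c → E b c → a = b)
    (hroot : ∀ b, ¬ E b root) :
    depth E root root = 0 := by
  have h : IsDirPath E root root [root] := by simp [IsDirPath, List.Chain']
  have := depth_succ_eq huniq hroot h
  simpa using this

lemma eq_root_of_depth_zero (huniq : ∀ a b c : S, E a c → E b c → a = b)
    (hroot : ∀ b, ¬ E b root)
    (hconn : (SimpleGraph.fromRel E).Connected) {v : S}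
    (hd : depth E root v = 0) : v = root := by
  obtain ⟨l, hl⟩ := dirPath_exists huniq hroot hconn v
  have := depth_succ_eq huniq hroot hl
  rw [hd] at this
  obtain ⟨a, rfl⟩ := List.length_eq_one_iff.1 this.symm
  have h1 := hl.2.1
  have h2 := hl.2.2.1
  simp only [List.head?_cons, Option.some.injEq] at h1
  simp only [List.getLast?_singleton, Option.some.injEq] at h2
  rw [← h1, ← h2]

lemma onPath_self (huniq : ∀ a b c : S, E a c → E b c → a = b)
    (hroot : ∀ b, ¬ E b root)
    (hconn : (SimpleGraph.fromRel E).Connected) (v : S) :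
    OnPath E root v v := by
  obtain ⟨l, hl⟩ := dirPath_exists huniq hroot hconn v
  exact ⟨l, hl, mem_of_getLast?' hl.2.2.1⟩

lemma onPath_root (huniq : ∀ a b c : S, E a c → E b c → a = b)
    (hroot : ∀ b, ¬ E b root)
    (hconn : (SimpleGraph.fromRel E).Connected) (v : S) :
    OnPath E root v root := by
  obtain ⟨l, hl⟩ := dirPath_exists huniq hroot hconn v
  exact ⟨l, hl, mem_of_head?' hl.2.1⟩

lemma vEntry_ub (huniq : ∀ a b c : S, E a c → E b c → a = b)
    (hroot : ∀ b, ¬ E b root) (i j : S) :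
    ∀ k ∈ {k | ∃ m : S, OnPath E root i m ∧ OnPath E root j m ∧ depth E root m = k},
      k ≤ depth E root i := by
  rintro k ⟨m, ⟨l, hl, hm⟩, _, rfl⟩
  exact depth_le_of_mem huniq hroot hl hm

lemma vEntry_ne (huniq : ∀ a b c : S, E a c → E b c → a = b)
    (hroot : ∀ b, ¬ E b root)
    (hconn : (SimpleGraph.fromRel E).Connected) (i j : S) :
    Set.Nonempty {k | ∃ m : S, OnPath E root i m ∧ OnPath E root j m ∧ depth E root m = k} :=
  ⟨depth E root root, root, onPath_root huniq hroot hconn i,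
    onPath_root huniq hroot hconn j, rfl⟩

lemma vEntry_self (huniq : ∀ a b c : S, E a c → E b c → a = b)
    (hroot : ∀ b, ¬ E b root)
    (hconn : (SimpleGraph.fromRel E).Connected) (i : S) :
    vEntry E root i i = depth E root i := by
  refine le_antisymm (csSup_le (vEntry_ne huniq hroot hconn i i) (vEntry_ub huniq hroot i i)) ?_
  exact le_csSup ⟨depth E root i, vEntry_ub huniq hroot i i⟩
    ⟨i, onPath_self huniq hroot hconn i, onPath_self huniq hroot hconn i, rfl⟩

lemma vEntry_eq_iff (huniq : ∀ a b c : S, E a c → E b c → a = b)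
    (hroot : ∀ b, ¬ E b root)
    (hconn : (SimpleGraph.fromRel E).Connected) (i j : S) :
    vEntry E root i j = depth E root i ↔ OnPath E root j i := by
  constructor
  · intro h
    have hmem := Nat.sSup_mem (vEntry_ne huniq hroot hconn i j)
      ⟨depth E root i, vEntry_ub huniq hroot i j⟩
    rw [show sSup {k | ∃ m : S, OnPath E root i m ∧ OnPath E root j m ∧ depth E root m = k}
        = vEntry E root i j from rfl, h] at hmem
    obtain ⟨m, ⟨l, hl, hml⟩, hmj, hdm⟩ := hmem
    obtain rfl : m = i := eq_of_mem_depth_eq huniq hroot hl hml hdm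
    exact hmj
  · intro h
    refine le_antisymm (csSup_le (vEntry_ne huniq hroot hconn i j) (vEntry_ub huniq hroot i j)) ?_
    exact le_csSup ⟨depth E root i, vEntry_ub huniq hroot i j⟩
      ⟨i, onPath_self huniq hroot hconn i, h, rfl⟩

lemma edge_facts (huniq : ∀ a b c : S, E a c → E b c → a = b)
    (hroot : ∀ b, ¬ E b root)
    (hconn : (SimpleGraph.fromRel E).Connected) {a b : S} (hab : E a b) :
    depth E root b = depth E root a + 1 ∧ OnPath E root b a := by
  obtain ⟨l, hl⟩ := dirPath_exists huniq hroot hconn a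
  have hlb := dirPath_snoc hl hab
  have h1 := depth_succ_eq huniq hroot hl
  have h2 := depth_succ_eq huniq hroot hlb
  simp only [List.length_append, List.length_singleton] at h2
  refine ⟨by omega, ⟨l ++ [b], hlb, ?_⟩⟩
  exact List.mem_append.2 (Or.inl (mem_of_getLast?' hl.2.2.1))

lemma exists_parent (huniq : ∀ a b c : S, E a c → E b c → a = b)
    (hroot : ∀ b, ¬ E b root)
    (hconn : (SimpleGraph.fromRel E).Connected) {v : S} (hv : v ≠ root) :
    ∃ p l₀, E p v ∧ IsDirPath E root p l₀ ∧ IsDirPath E root v (l₀ ++ [v]) ∧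
      depth E root v = depth E root p + 1 := by
  obtain ⟨l, hl⟩ := dirPath_exists huniq hroot hconn v
  rcases dirPath_cases hl with ⟨rfl, _⟩ | ⟨p, l₀, h₀, hp, rfl⟩
  · exact absurd rfl hv
  · have h1 := depth_succ_eq huniq hroot h₀
    have h2 := depth_succ_eq huniq hroot hl
    simp only [List.length_append, List.length_singleton] at h2
    exact ⟨p, l₀, hp, h₀, hl, by omega⟩

lemma main_dir {E1 E2 : S → S → Prop} {root1 root2 : S}
    (huniq1 : ∀ a b c : S, E1 a c → E1 b c → a = b)
    (hroot1 : ∀ b, ¬ E1 b root1)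
    (hconn1 : (SimpleGraph.fromRel E1).Connected)
    (huniq2 : ∀ a b c : S, E2 a c → E2 b c → a = b)
    (hroot2 : ∀ b, ¬ E2 b root2)
    (hconn2 : (SimpleGraph.fromRel E2).Connected)
    (hv : ∀ i j : S, vEntry E1 root1 i j = vEntry E2 root2 i j)
    {a b : S} (hab : E1 a b) : E2 a b := by
  have hd : ∀ v : S, depth E1 root1 v = depth E2 root2 v := by
    intro v
    rw [← vEntry_self huniq1 hroot1 hconn1 v, ← vEntry_self huniq2 hroot2 hconn2 v, hv]
  obtain ⟨hdb, honb⟩ := edge_facts huniq1 hroot1 hconn1 hab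
  -- a lies on path to b in tree 2
  have hv2 : vEntry E2 root2 a b = depth E2 root2 a := by
    rw [← hv, ← hd]
    exact (vEntry_eq_iff huniq1 hroot1 hconn1 a b).2 honb
  have hon2 : OnPath E2 root2 b a := (vEntry_eq_iff huniq2 hroot2 hconn2 a b).1 hv2
  have hdb2 : depth E2 root2 b = depth E2 root2 a + 1 := by rw [← hd, ← hd]; exact hdb
  have hbroot : b ≠ root2 := by
    intro h
    rw [h, depth_root huniq2 hroot2] at hdb2
    omega
  obtain ⟨p, l₀, hp, h₀, hlb, hdp⟩ := exists_parent huniq2 hroot2 hconn2 hbroot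
  -- a is on the canonical path l₀ ++ [b], and a ≠ b
  obtain ⟨l', hl', hal'⟩ := hon2
  have : l' = l₀ ++ [b] := dirPath_unique_s9 huniq2 hroot2 l'.length b l' (l₀ ++ [b]) le_rfl hl' hlb
  subst this
  have hane : a ≠ b := by
    intro h; rw [h] at hdb2; omega
  have hal₀ : a ∈ l₀ := by
    rcases List.mem_append.1 hal' with h | h
    · exact h
    · simp only [List.mem_singleton] at h; exact absurd h hane
  have hdap : depth E2 root2 a = depth E2 root2 p := by omega
  obtain rfl : a = p := eq_of_mem_depth_eq huniq2 hroot2 h₀ hal₀ hdap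
  exact hp

end TreeAux

/-- Let `T1` and `T2` be transmission trees on the same node set `S` with
all cases sampled. If `v(T1) = v(T2)`, i.e. every pair of nodes has the same MRCI depth
in both trees, then `E1 = E2`: the trees are identical. -/
theorem stmt9 {S : Type*} [Fintype S] (E1 E2 : S → S → Prop)
    (h1 : IsTransTree E1) (h2 : IsTransTree E2)
    (root1 : S) (hroot1 : ∀ b, ¬ E1 b root1)
    (root2 : S) (hroot2 : ∀ b, ¬ E2 b root2)
    (hv : ∀ i j : S, vEntry E1 root1 i j = vEntry E2 root2 i j) :
    ∀ i j : S, E1 i j ↔ E2 i j := by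
  obtain ⟨huniq1, _, hconn1⟩ := h1
  obtain ⟨huniq2, _, hconn2⟩ := h2
  intro i j
  constructor
  · exact main_dir huniq1 hroot1 hconn1 huniq2 hroot2 hconn2 hv
  · exact main_dir huniq2 hroot2 hconn2 huniq1 hroot1 hconn1 (fun i j => (hv i j).symm)
end

section
/- Let T1=(S ∪ U1, E1) and T2=(S ∪ U2, E2) be transmission trees with the same sampled set S and v|_S(T1) = v|_S(T2). Then for every sampled node i ∈ S: i has the same depth δ in T1 and T2, and for every x with 0 ≤ x ≤ δ, the node at depth x on the path from the source to i in T1 is sampled if and only if the node at depth x on the path from the source to i in T2 is sampled, and when both are sampled they are the same sampled case. -/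
namespace Stmt12Aux

variable {V : Type*} {E : V → V → Prop} {root : V}

lemma dirPath_snoc {a b : V} {l : List V} (h : IsDirPath E root a l) (hab : E a b) :
    IsDirPath E root b (l ++ [b]) := by
  obtain ⟨hne, hhd, hlast, hch⟩ := h
  refine ⟨by simp, ?_, ?_, ?_⟩
  · cases l with
    | nil => exact absurd rfl hne
    | cons x xs => simpa using hhd
  · simp
  · rw [List.Chain', List.isChain_append]
    refine ⟨hch, List.isChain_singleton b, ?_⟩
    intro x hx y hy
    simp at hy
    subst hy
    rw [hlast] at hx
    simp at hx
    subst hx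
    exact hab

lemma dirPath_length_pos {n : V} {l : List V} (h : IsDirPath E root n l) : 0 < l.length :=
  List.length_pos_iff.mpr h.1

lemma dirPath_singleton {n : V} {l : List V} (h : IsDirPath E root n l)
    (hl : l.length = 1) : n = root ∧ l = [root] := by
  obtain ⟨hne, hhd, hlast, -⟩ := h
  obtain ⟨x, rfl⟩ : ∃ x, l = [x] := by
    cases l with
    | nil => simp at hl
    | cons a t => cases t with
      | nil => exact ⟨a, rfl⟩
      | cons b t => simp at hl
  simp at hhd hlast
  subst hhd; subst hlast; exact ⟨rfl, rfl⟩

lemma dirPath_decomp {n : V} {l : List V} (h : IsDirPath E root n l)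
    (hlen : 2 ≤ l.length) :
    ∃ l₀ a, l = l₀ ++ [n] ∧ E a n ∧ IsDirPath E root a l₀ := by
  obtain ⟨hne, hhd, hlast, hch⟩ := h
  have hdecomp := List.dropLast_append_getLast hne
  have hglast : l.getLast hne = n := by
    rw [List.getLast?_eq_getLast hne] at hlast; simpa using hlast
  have hdne : l.dropLast ≠ [] := by
    intro hnil
    have := (List.length_dropLast : l.dropLast.length = l.length - 1)
    rw [hnil] at this
    simp at this
    omega
  refine ⟨l.dropLast, l.dropLast.getLast hdne, by rw [hglast] at hdecomp; exact hdecomp.symm, ?_, ?_, ?_, ?_, ?_⟩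
  · rw [← hdecomp, List.Chain', List.isChain_append] at hch
    have := hch.2.2 (l.dropLast.getLast hdne)
      (by rw [List.getLast?_eq_getLast hdne]; rfl) (l.getLast hne) (by simp)
    rwa [hglast] at this
  · exact hdne
  · rw [← hdecomp] at hhd
    cases hd : l.dropLast with
    | nil => exact absurd hd hdne
    | cons x xs => rw [hd] at hhd; simpa using hhd
  · rw [List.getLast?_eq_getLast hdne]
  · rw [← hdecomp, List.Chain', List.isChain_append] at hch
    exact hch.1

lemma dirPath_to_root (hroot : ∀ b, ¬ E b root) {l : List V}
    (h : IsDirPath E root root l) : l = [root] := by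
  rcases Nat.lt_or_ge l.length 2 with hl | hl
  · have := dirPath_length_pos h
    exact (dirPath_singleton h (by omega)).2
  · obtain ⟨l₀, a, -, hE, -⟩ := dirPath_decomp h hl
    exact absurd hE (hroot a)

lemma dirPath_unique (hE : ∀ a b c : V, E a c → E b c → a = b)
    (hroot : ∀ b, ¬ E b root) :
    ∀ l l' : List V, ∀ n : V, IsDirPath E root n l → IsDirPath E root n l' → l = l' := by
  suffices H : ∀ k l l' (n : V), l.length ≤ k → IsDirPath E root n l → IsDirPath E root n l' → l = l' by
    intro l l' n h h'
    exact H l.length l l' n le_rfl h h'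
  intro k
  induction k with
  | zero =>
    intro l l' n hk h h'
    have := dirPath_length_pos h
    omega
  | succ k ih =>
    intro l l' n hk h h'
    rcases Nat.lt_or_ge l.length 2 with hl | hl
    · have hpos := dirPath_length_pos h
      obtain ⟨rfl, rfl⟩ := dirPath_singleton h (by omega)
      exact (dirPath_to_root hroot h').symm
    · obtain ⟨l₀, a, rfl, hEa, hpa⟩ := dirPath_decomp h hl
      have hl' : 2 ≤ l'.length := by
        rcases Nat.lt_or_ge l'.length 2 with h2 | h2
        · have hpos := dirPath_length_pos h'
          obtain ⟨rfl, -⟩ := dirPath_singleton h' (by omega)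
          exact absurd hEa (hroot a)
        · exact h2
      obtain ⟨l₀', a', rfl, hEa', hpa'⟩ := dirPath_decomp h' hl'
      have : a = a' := hE a a' n hEa hEa'
      subst this
      have : l₀ = l₀' := by
        refine ih l₀ l₀' a ?_ hpa hpa'
        simp at hk
        omega
      rw [this]

lemma dirPath_exists (hE : ∀ a b c : V, E a c → E b c → a = b)
    (hroot : ∀ b, ¬ E b root)
    (hconn : (SimpleGraph.fromRel E).Connected) (n : V) :
    ∃ l, IsDirPath E root n l := by
  have hreach : (SimpleGraph.fromRel E).Reachable root n := hconn.preconnected root n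
  rw [SimpleGraph.reachable_iff_reflTransGen] at hreach
  induction hreach with
  | refl => exact ⟨[root], by simp, rfl, rfl, List.isChain_singleton root⟩
  | @tail b c hbc hadj ih =>
    obtain ⟨l, hl⟩ := ih
    obtain ⟨hne, hEor⟩ := hadj
    rcases hEor with hbc' | hcb
    · exact ⟨l ++ [c], dirPath_snoc hl hbc'⟩
    · -- E c b, path to b exists, so b ≠ root, decompose
      rcases Nat.lt_or_ge l.length 2 with h2 | h2
      · have hpos := dirPath_length_pos hl
        obtain ⟨rfl, -⟩ := dirPath_singleton hl (by omega)
        exact absurd hcb (hroot c)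
      · obtain ⟨l₀, a, -, hEa, hpa⟩ := dirPath_decomp hl h2
        have : a = c := hE a c b hEa hcb
        subst this
        exact ⟨l₀, hpa⟩


section Depth

variable (hE : ∀ a b c : V, E a c → E b c → a = b) (hroot : ∀ b, ¬ E b root)
include hE hroot

lemma depth_eq {n : V} {l : List V} (h : IsDirPath E root n l) :
    depth E root n = l.length - 1 := by
  have hpos := dirPath_length_pos h
  have : {k | ∃ l' : List V, IsDirPath E root n l' ∧ l'.length = k + 1} = {l.length - 1} := by
    ext k
    simp only [Set.mem_setOf_eq, Set.mem_singleton_iff]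
    constructor
    · rintro ⟨l', h', hlen⟩
      have := dirPath_unique hE hroot l' l n h' h
      subst this
      omega
    · rintro rfl
      exact ⟨l, h, by omega⟩
  rw [depth, this, csInf_singleton]

lemma take_isDirPath {i : V} {l : List V} (h : IsDirPath E root i l)
    {k : ℕ} (hk : k < l.length) :
    IsDirPath E root (l.get ⟨k, hk⟩) (l.take (k + 1)) := by
  obtain ⟨hne, hhd, hlast, hch⟩ := h
  have hlen : (l.take (k + 1)).length = k + 1 := by
    rw [List.length_take]; omega
  have hne' : l.take (k + 1) ≠ [] := by
    intro hnil; rw [hnil] at hlen; simp at hlen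
  refine ⟨hne', ?_, ?_, hch.take _⟩
  · cases l with
    | nil => exact absurd rfl hne
    | cons x xs => simpa using hhd
  · rw [List.getLast?_eq_getLast hne', List.getLast_eq_getElem,
      (show l.get ⟨k, hk⟩ = (l.take (k + 1)).get ⟨k, by rw [hlen]; omega⟩ from by simp)]
    simp only [List.get_eq_getElem]
    congr 1
    congr 1
    omega

lemma depth_get {i : V} {l : List V} (h : IsDirPath E root i l)
    {k : ℕ} (hk : k < l.length) :
    depth E root (l.get ⟨k, hk⟩) = k := by
  rw [depth_eq hE hroot (take_isDirPath hE hroot h hk)]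
  simp
  omega

lemma mem_depth {i : V} {l : List V} (h : IsDirPath E root i l)
    {m : V} (hm : m ∈ l) :
    ∃ hk : depth E root m < l.length, l.get ⟨depth E root m, hk⟩ = m := by
  obtain ⟨k, hgk⟩ := List.mem_iff_get.mp hm
  have hd : depth E root m = k.1 := by rw [← hgk]; exact depth_get hE hroot h k.2
  have hk2 : depth E root m < l.length := by rw [hd]; exact k.2
  refine ⟨hk2, ?_⟩
  have heq : l.get ⟨depth E root m, hk2⟩ = l.get k := by
    congr 1
    exact Fin.ext hd
  exact heq.trans hgk

lemma depth_lt {i : V} {l : List V} (h : IsDirPath E root i l)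
    {m : V} (hm : m ∈ l) : depth E root m < l.length :=
  (mem_depth hE hroot h hm).1

lemma eq_of_depth_eq {i : V} {l : List V} (h : IsDirPath E root i l)
    {m m' : V} (hm : m ∈ l) (hm' : m' ∈ l)
    (hd : depth E root m = depth E root m') : m = m' := by
  obtain ⟨hk, hg⟩ := mem_depth hE hroot h hm
  obtain ⟨hk', hg'⟩ := mem_depth hE hroot h hm'
  rw [← hg, ← hg']
  congr 1
  exact Fin.ext hd

lemma onPath_iff_mem {i : V} {l : List V} (h : IsDirPath E root i l) {m : V} :
    OnPath E root i m ↔ m ∈ l := by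
  constructor
  · rintro ⟨l', h', hm⟩
    rwa [dirPath_unique hE hroot l' l i h' h] at hm
  · exact fun hm => ⟨l, h, hm⟩

omit hE hroot in
lemma last_mem {i : V} {l : List V} (h : IsDirPath E root i l) : i ∈ l := by
  obtain ⟨hne, -, hlast, -⟩ := h
  rw [List.getLast?_eq_getLast hne] at hlast
  have := List.getLast_mem hne
  rw [Option.some_inj.mp hlast] at this
  exact this

omit hE hroot in
lemma root_mem {i : V} {l : List V} (h : IsDirPath E root i l) : root ∈ l := by
  apply List.mem_of_mem_head?
  rw [h.2.1]; rfl

lemma vEntry_self {i : V} {l : List V} (h : IsDirPath E root i l) :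
    vEntry E root i i = depth E root i := by
  have hset : {k | ∃ m : V, OnPath E root i m ∧ OnPath E root i m ∧ depth E root m = k}
      = Set.Iic (depth E root i) := by
    ext k
    simp only [Set.mem_setOf_eq, Set.mem_Iic]
    constructor
    · rintro ⟨m, hm, -, rfl⟩
      rw [onPath_iff_mem hE hroot h] at hm
      have := depth_lt hE hroot h hm
      rw [depth_eq hE hroot h]
      omega
    · intro hk
      have hkl : k < l.length := by
        rw [depth_eq hE hroot h] at hk
        have := dirPath_length_pos h
        omega
      refine ⟨l.get ⟨k, hkl⟩, ?_, ?_, depth_get hE hroot h hkl⟩ <;>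
        exact (onPath_iff_mem hE hroot h).mpr (l.get_mem _)
  rw [vEntry, hset, csSup_Iic]

lemma prefix_path {a i : V} {la li : List V}
    (ha : IsDirPath E root a la) (hi : IsDirPath E root i li)
    (hmem : a ∈ li) : la = li.take (depth E root a + 1) := by
  obtain ⟨hk, hg⟩ := mem_depth hE hroot hi hmem
  have := take_isDirPath hE hroot hi hk
  rw [hg] at this
  exact dirPath_unique hE hroot la _ a ha this

lemma vEntry_of_mem {a i : V} {la li : List V}
    (ha : IsDirPath E root a la) (hi : IsDirPath E root i li)
    (hmem : a ∈ li) : vEntry E root a i = depth E root a := by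
  have hpre := prefix_path hE hroot ha hi hmem
  have hset : {k | ∃ m : V, OnPath E root a m ∧ OnPath E root i m ∧ depth E root m = k}
      = Set.Iic (depth E root a) := by
    ext k
    simp only [Set.mem_setOf_eq, Set.mem_Iic]
    constructor
    · rintro ⟨m, hma, -, rfl⟩
      rw [onPath_iff_mem hE hroot ha] at hma
      have := depth_lt hE hroot ha hma
      rw [depth_eq hE hroot ha]
      omega
    · intro hk
      have hkl : k < la.length := by
        rw [depth_eq hE hroot ha] at hk
        have := dirPath_length_pos ha
        omega
      obtain ⟨x, hxla, hdx⟩ : ∃ x, x ∈ la ∧ depth E root x = k :=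
        ⟨la.get ⟨k, hkl⟩, la.get_mem _, depth_get hE hroot ha hkl⟩
      have hxli : x ∈ li := by
        have h2 : x ∈ List.take (depth E root a + 1) li := hpre ▸ hxla
        exact List.mem_of_mem_take h2
      exact ⟨x, (onPath_iff_mem hE hroot ha).mpr hxla,
        (onPath_iff_mem hE hroot hi).mpr hxli, hdx⟩
  rw [vEntry, hset, csSup_Iic]

lemma mem_of_vEntry {a i : V} {la li : List V}
    (ha : IsDirPath E root a la) (hi : IsDirPath E root i li)
    (hv : vEntry E root a i = depth E root a) : a ∈ li := by
  set Sk := {k | ∃ m : V, OnPath E root a m ∧ OnPath E root i m ∧ depth E root m = k} with hSk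
  have hne : Sk.Nonempty := by
    refine ⟨depth E root root, root, (onPath_iff_mem hE hroot ha).mpr (root_mem ha),
      (onPath_iff_mem hE hroot hi).mpr (root_mem hi), rfl⟩
  have hbdd : BddAbove Sk := by
    refine ⟨la.length, ?_⟩
    rintro k ⟨m, hma, -, rfl⟩
    rw [onPath_iff_mem hE hroot ha] at hma
    exact le_of_lt (depth_lt hE hroot ha hma)
  have hmem := Nat.sSup_mem hne hbdd
  obtain ⟨m, hma, hmi, hdm⟩ := hmem
  rw [onPath_iff_mem hE hroot ha] at hma
  rw [onPath_iff_mem hE hroot hi] at hmi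
  have hva : vEntry E root a i = sSup Sk := rfl
  have hda : depth E root m = depth E root a := by
    rw [hdm, ← hva, hv]
  have : m = a := eq_of_depth_eq hE hroot ha hma (last_mem ha) hda
  rwa [this] at hmi

end Depth

end Stmt12Aux


/-- Let `T1 = (S ⊕ U1, E1)` and `T2 = (S ⊕ U2, E2)` be transmission trees
with the same sampled set `S` and `v|_S(T1) = v|_S(T2)`. Then every sampled node `i` has
the same depth `δ` in both trees, and for every `0 ≤ x ≤ δ`, the node at depth `x` on the
path from the source to `i` in `T1` is sampled iff the node at depth `x` on the path from
the source to `i` in `T2` is sampled, and when both are sampled they are the same case. -/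
theorem stmt12 {S U1 U2 : Type*} [Fintype S] [Fintype U1] [Fintype U2]
    (E1 : S ⊕ U1 → S ⊕ U1 → Prop) (E2 : S ⊕ U2 → S ⊕ U2 → Prop)
    (h1 : IsTransTree E1) (h2 : IsTransTree E2)
    (root1 : S ⊕ U1) (hroot1 : ∀ b, ¬ E1 b root1)
    (root2 : S ⊕ U2) (hroot2 : ∀ b, ¬ E2 b root2)
    (hv : ∀ s t : S, vEntry E1 root1 (Sum.inl s) (Sum.inl t)
      = vEntry E2 root2 (Sum.inl s) (Sum.inl t)) :
    ∀ i : S,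
      depth E1 root1 (Sum.inl i) = depth E2 root2 (Sum.inl i) ∧
      ∀ x : ℕ, x ≤ depth E1 root1 (Sum.inl i) →
        ((∃ a : S, OnPath E1 root1 (Sum.inl i) (Sum.inl a) ∧
            depth E1 root1 (Sum.inl a) = x) ↔
          (∃ b : S, OnPath E2 root2 (Sum.inl i) (Sum.inl b) ∧
            depth E2 root2 (Sum.inl b) = x)) ∧
        (∀ a b : S,
          OnPath E1 root1 (Sum.inl i) (Sum.inl a) → depth E1 root1 (Sum.inl a) = x →
          OnPath E2 root2 (Sum.inl i) (Sum.inl b) → depth E2 root2 (Sum.inl b) = x →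
          a = b) := by
  obtain ⟨hE1, -, hconn1⟩ := h1
  obtain ⟨hE2, -, hconn2⟩ := h2
  have hex1 : ∀ n, ∃ l, IsDirPath E1 root1 n l :=
    Stmt12Aux.dirPath_exists hE1 hroot1 hconn1
  have hex2 : ∀ n, ∃ l, IsDirPath E2 root2 n l :=
    Stmt12Aux.dirPath_exists hE2 hroot2 hconn2
  have hdep : ∀ s : S, depth E1 root1 (Sum.inl s) = depth E2 root2 (Sum.inl s) := by
    intro s
    obtain ⟨l1, hl1⟩ := hex1 (Sum.inl s)
    obtain ⟨l2, hl2⟩ := hex2 (Sum.inl s)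
    rw [← Stmt12Aux.vEntry_self hE1 hroot1 hl1, ← Stmt12Aux.vEntry_self hE2 hroot2 hl2]
    exact hv s s
  have htrans : ∀ i a : S, OnPath E1 root1 (Sum.inl i) (Sum.inl a) →
      OnPath E2 root2 (Sum.inl i) (Sum.inl a) := by
    intro i a hOn
    obtain ⟨li1, hli1⟩ := hex1 (Sum.inl i)
    obtain ⟨la1, hla1⟩ := hex1 (Sum.inl a)
    obtain ⟨li2, hli2⟩ := hex2 (Sum.inl i)
    obtain ⟨la2, hla2⟩ := hex2 (Sum.inl a)
    have hmem1 : (Sum.inl a : S ⊕ U1) ∈ li1 :=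
      (Stmt12Aux.onPath_iff_mem hE1 hroot1 hli1).mp hOn
    have hv1 : vEntry E1 root1 (Sum.inl a) (Sum.inl i) = depth E1 root1 (Sum.inl a) :=
      Stmt12Aux.vEntry_of_mem hE1 hroot1 hla1 hli1 hmem1
    have hv2 : vEntry E2 root2 (Sum.inl a) (Sum.inl i) = depth E2 root2 (Sum.inl a) := by
      rw [← hv a i, hv1, hdep a]
    have hmem2 := Stmt12Aux.mem_of_vEntry hE2 hroot2 hla2 hli2 hv2
    exact (Stmt12Aux.onPath_iff_mem hE2 hroot2 hli2).mpr hmem2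
  have htrans' : ∀ i b : S, OnPath E2 root2 (Sum.inl i) (Sum.inl b) →
      OnPath E1 root1 (Sum.inl i) (Sum.inl b) := by
    intro i b hOn
    obtain ⟨li1, hli1⟩ := hex1 (Sum.inl i)
    obtain ⟨lb1, hlb1⟩ := hex1 (Sum.inl b)
    obtain ⟨li2, hli2⟩ := hex2 (Sum.inl i)
    obtain ⟨lb2, hlb2⟩ := hex2 (Sum.inl b)
    have hmem2 : (Sum.inl b : S ⊕ U2) ∈ li2 :=
      (Stmt12Aux.onPath_iff_mem hE2 hroot2 hli2).mp hOn
    have hv2 : vEntry E2 root2 (Sum.inl b) (Sum.inl i) = depth E2 root2 (Sum.inl b) :=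
      Stmt12Aux.vEntry_of_mem hE2 hroot2 hlb2 hli2 hmem2
    have hv1 : vEntry E1 root1 (Sum.inl b) (Sum.inl i) = depth E1 root1 (Sum.inl b) := by
      rw [hv b i, hv2, hdep b]
    have hmem1 := Stmt12Aux.mem_of_vEntry hE1 hroot1 hlb1 hli1 hv1
    exact (Stmt12Aux.onPath_iff_mem hE1 hroot1 hli1).mpr hmem1
  intro i
  refine ⟨hdep i, ?_⟩
  intro x hx
  refine ⟨⟨?_, ?_⟩, ?_⟩
  · rintro ⟨a, hOn, hda⟩
    exact ⟨a, htrans i a hOn, by rw [← hdep a]; exact hda⟩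
  · rintro ⟨b, hOn, hdb⟩
    exact ⟨b, htrans' i b hOn, by rw [hdep b]; exact hdb⟩
  · intro a b hOa hda hOb hdb
    have hOa2 := htrans i a hOa
    obtain ⟨li2, hli2⟩ := hex2 (Sum.inl i)
    have hma : (Sum.inl a : S ⊕ U2) ∈ li2 :=
      (Stmt12Aux.onPath_iff_mem hE2 hroot2 hli2).mp hOa2
    have hmb : (Sum.inl b : S ⊕ U2) ∈ li2 :=
      (Stmt12Aux.onPath_iff_mem hE2 hroot2 hli2).mp hOb
    have heq : (Sum.inl a : S ⊕ U2) = Sum.inl b :=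
      Stmt12Aux.eq_of_depth_eq hE2 hroot2 hli2 hma hmb (by rw [← hdep a, hda, hdb])
    exact Sum.inl.inj heq
end
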